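/- Let q be a prime power, ℓ, m ≥ 1, let A and B be ℓm×ℓm matrices over F_q that are F_q-linear combinations of the monomials x^a y^b (x = S_ℓ ⊗ I_m, y = I_ℓ ⊗ S_m), and let γ₁, γ₂, δ₁, δ₂ ∈ F_q be nonzero with γ₁δ₁ + γ₂δ₂ = 0. Set H_X = [γ₁A | γ₂B] and H_Z = [δ₁Bᵀ | δ₂Aᵀ], and suppose ker(H_Z) is not contained in rowspace(H_X). Then the two minimum logical weights coincide: min{wt(v) : v ∈ ker(H_Z) \ rowspace(H_X)} = min{wt(v) : v ∈ ker(H_X) \ rowspace(H_Z)} (in particular the second set is also nonempty); i.e., d_X = d_Z for the qudit bivariate bicycle code. -/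

import Mathlib

open Matrix Kronecker

/-- The ℓ×ℓ cyclic shift matrix over `F`: entry `(i,j)` is 1 iff `j ≡ i+1 (mod ℓ)`. -/
def cyclicShift (ℓ : ℕ) [NeZero ℓ] (F : Type*) [Zero F] [One F] :
    Matrix (ZMod ℓ) (ZMod ℓ) F :=
  fun i j => if j = i + 1 then 1 else 0

section Aux

variable {F : Type*} [Field F]

lemma bb_mul_symm' {n : Type*} [Fintype n] [AddCommGroup n]
    (M N : Matrix n n F)
    (hM : ∀ i j, M (-i) (-j) = M j i) (hN : ∀ i j, N (-i) (-j) = N j i) :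
    ∀ i j, (M * N) (-i) (-j) = (N * M) j i := by
  intro i j
  rw [Matrix.mul_apply, Matrix.mul_apply]
  rw [← Equiv.sum_comp (Equiv.neg n) (fun k => M (-i) k * N k (-j))]
  simp only [Equiv.neg_apply, hM, hN]
  exact Finset.sum_congr rfl fun k _ => mul_comm _ _

lemma bb_mul_symm {n : Type*} [Fintype n] [AddCommGroup n]
    (M N : Matrix n n F)
    (hM : ∀ i j, M (-i) (-j) = M j i) (hN : ∀ i j, N (-i) (-j) = N j i)
    (hc : M * N = N * M) : ∀ i j, (M * N) (-i) (-j) = (M * N) j i := by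
  intro i j
  rw [bb_mul_symm' M N hM hN, ← hc]

lemma bb_pow_symm {n : Type*} [Fintype n] [DecidableEq n] [AddCommGroup n]
    (M : Matrix n n F) (hM : ∀ i j, M (-i) (-j) = M j i) (a : ℕ) :
    ∀ i j, (M ^ a) (-i) (-j) = (M ^ a) j i := by
  induction a with
  | zero => intro i j; simp [Matrix.one_apply, neg_inj, eq_comm]
  | succ a ih =>
      rw [pow_succ]
      exact bb_mul_symm _ _ ih hM (by rw [← pow_succ, ← pow_succ'])

lemma bb_span_symm {ℓ m : ℕ} [NeZero ℓ] [NeZero m]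
    (x y M : Matrix (ZMod ℓ × ZMod m) (ZMod ℓ × ZMod m) F)
    (hx : x = cyclicShift ℓ F ⊗ₖ (1 : Matrix (ZMod m) (ZMod m) F))
    (hy : y = (1 : Matrix (ZMod ℓ) (ZMod ℓ) F) ⊗ₖ cyclicShift m F)
    (hM : M ∈ Submodule.span F {M : Matrix (ZMod ℓ × ZMod m) (ZMod ℓ × ZMod m) F |
        ∃ a b : ℕ, M = x ^ a * y ^ b}) :
    ∀ i j, M (-i) (-j) = M j i := by
  have hxs : ∀ i j, x (-i) (-j) = x j i := by
    subst hx
    intro i j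
    simp only [Matrix.kroneckerMap_apply, cyclicShift, Matrix.one_apply,
      Prod.fst_neg, Prod.snd_neg, neg_inj]
    have h1 : (-j.1 = -i.1 + 1) ↔ (i.1 = j.1 + 1) :=
      ⟨fun h => by linear_combination h, fun h => by linear_combination h⟩
    have h2 : (i.2 = j.2) ↔ (j.2 = i.2) := eq_comm
    rw [if_congr h1 rfl rfl, if_congr h2 rfl rfl]
  have hys : ∀ i j, y (-i) (-j) = y j i := by
    subst hy
    intro i j
    simp only [Matrix.kroneckerMap_apply, cyclicShift, Matrix.one_apply,
      Prod.fst_neg, Prod.snd_neg, neg_inj]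
    have h1 : (-j.2 = -i.2 + 1) ↔ (i.2 = j.2 + 1) :=
      ⟨fun h => by linear_combination h, fun h => by linear_combination h⟩
    have h2 : (i.1 = j.1) ↔ (j.1 = i.1) := eq_comm
    rw [if_congr h1 rfl rfl, if_congr h2 rfl rfl]
  have hcomm : x * y = y * x := by
    subst hx hy
    rw [← Matrix.mul_kronecker_mul, ← Matrix.mul_kronecker_mul, one_mul, mul_one,
      one_mul, mul_one]
  induction hM using Submodule.span_induction with
  | mem M hmem =>
      obtain ⟨a, b, rfl⟩ := hmem
      exact bb_mul_symm _ _ (bb_pow_symm x hxs a) (bb_pow_symm y hys b)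
        ((Commute.pow_pow hcomm a b).eq)
  | zero => intro i j; simp
  | add M N _ _ ihM ihN => intro i j; simp [Matrix.add_apply, ihM i j, ihN i j]
  | smul c M _ ihM => intro i j; simp [Matrix.smul_apply, ihM i j]

lemma bb_sum_factor {n : Type*} [Fintype n] (f g : n → F) (r : F)
    (h : ∀ i, f i = r * g i) : ∑ i, f i = r * ∑ i, g i := by
  rw [Finset.mul_sum]; exact Finset.sum_congr rfl fun i _ => h i

variable [DecidableEq F]

lemma bb_key {n : Type*} [Fintype n] [DecidableEq n] [AddCommGroup n]
    (A B : Matrix n n F)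
    (sA : ∀ i j, A (-i) (-j) = A j i) (sB : ∀ i j, B (-i) (-j) = B j i)
    (γ₁ γ₂ δ₁ δ₂ : F) (hγ₁ : γ₁ ≠ 0) (hδ₂ : δ₂ ≠ 0)
    (hCSS : γ₁ * δ₁ + γ₂ * δ₂ = 0)
    (v : n ⊕ n → F)
    (hv : (fromCols (δ₁ • Bᵀ) (δ₂ • Aᵀ)).mulVec v = 0)
    (hvs : v ∉ Submodule.span F (Set.range (fromCols (γ₁ • A) (γ₂ • B)))) :
    ∃ w : n ⊕ n → F, (fromCols (γ₁ • A) (γ₂ • B)).mulVec w = 0 ∧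
      w ∉ Submodule.span F (Set.range (fromCols (δ₁ • Bᵀ) (δ₂ • Aᵀ))) ∧
      hammingNorm w = hammingNorm v := by
  classical
  set w : n ⊕ n → F :=
    Sum.elim (fun i => v (Sum.inr (-i))) (fun i => - v (Sum.inl (-i))) with hw
  have sA' : ∀ i j : n, A (-i) j = A (-j) i := fun i j => by
    have := sA i (-j); rwa [neg_neg] at this
  have sB' : ∀ i j : n, B (-i) j = B (-j) i := fun i j => by
    have := sB i (-j); rwa [neg_neg] at this
  refine ⟨w, ?_, ?_, ?_⟩
  · funext i
    have hvi := congrFun hv (-i)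
    simp only [Matrix.mulVec, dotProduct, Fintype.sum_sum_type,
      fromCols_apply_inl, fromCols_apply_inr, Matrix.smul_apply,
      Matrix.transpose_apply, smul_eq_mul, Pi.zero_apply] at hvi ⊢
    rw [← Equiv.sum_comp (Equiv.neg n) (fun j => γ₁ * A i j * w (Sum.inl j)),
      ← Equiv.sum_comp (Equiv.neg n) (fun j => γ₂ * B i j * w (Sum.inr j))]
    simp only [Equiv.neg_apply, hw, Sum.elim_inl, Sum.elim_inr, neg_neg]
    have sA'' : ∀ j : n, A i (-j) = A j (-i) := fun j => by
      have := sA (-i) j; rwa [neg_neg] at this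
    have sB'' : ∀ j : n, B i (-j) = B j (-i) := fun j => by
      have := sB (-i) j; rwa [neg_neg] at this
    have e1 : ∑ j, γ₁ * A i (-j) * v (Sum.inr j)
        = γ₁ * ∑ j, A j (-i) * v (Sum.inr j) :=
      bb_sum_factor _ _ _ (fun j => by rw [sA'' j]; ring)
    have e2 : ∑ j, γ₂ * B i (-j) * -v (Sum.inl j)
        = (-γ₂) * ∑ j, B j (-i) * v (Sum.inl j) :=
      bb_sum_factor _ _ _ (fun j => by rw [sB'' j]; ring)
    rw [e1, e2]
    have hvi' : δ₁ * (∑ j, B j (-i) * v (Sum.inl j))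
        + δ₂ * (∑ j, A j (-i) * v (Sum.inr j)) = 0 := by
      rw [Finset.mul_sum, Finset.mul_sum, ← hvi]
      congr 1 <;> exact Finset.sum_congr rfl fun j _ => by ring
    set P := ∑ j, B j (-i) * v (Sum.inl j)
    set Q := ∑ j, A j (-i) * v (Sum.inr j)
    have h2 : δ₂ * (γ₁ * Q + -γ₂ * P) = 0 := by
      linear_combination γ₁ * hvi' - P * hCSS
    exact (mul_eq_zero.mp h2).resolve_left hδ₂
  · intro hmem
    apply hvs
    replace hmem := (Submodule.mem_span_range_iff_exists_fun (R := F)).mp hmem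
    obtain ⟨c, hc⟩ := hmem
    rw [← Submodule.smul_mem_iff _ hγ₁]; refine (Submodule.mem_span_range_iff_exists_fun (R := F)).mpr ?_
    refine ⟨fun i => -δ₂ * c (-i), ?_⟩
    have hcs : ∀ s, ∑ i, c i * (fromCols (δ₁ • Bᵀ) (δ₂ • Aᵀ)) i s = w s := by
      intro s
      have := congrFun hc s
      simpa [Finset.sum_apply] using this
    funext s
    simp only [Finset.sum_apply, Pi.smul_apply, smul_eq_mul]
    cases s with
    | inl k =>
        have h1 := hcs (Sum.inr (-k))
        simp only [fromCols_apply_inr, Matrix.smul_apply, Matrix.transpose_apply,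
          smul_eq_mul, hw, Sum.elim_inr, neg_neg] at h1
        rw [← Equiv.sum_comp (Equiv.neg n)
          (fun i => -δ₂ * c (-i) * (fromCols (γ₁ • A) (γ₂ • B)) i (Sum.inl k))]
        simp only [Equiv.neg_apply, neg_neg, fromCols_apply_inl, Matrix.smul_apply,
          smul_eq_mul]
        have e3 : ∑ i, -δ₂ * c i * (γ₁ * A (-i) k)
            = (-γ₁) * ∑ i, c i * (δ₂ * A (-k) i) :=
          bb_sum_factor _ _ _ (fun i => by rw [sA' i k]; ring)
        rw [e3, h1]
        simp [smul_eq_mul]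
    | inr k =>
        have h1 := hcs (Sum.inl (-k))
        simp only [fromCols_apply_inl, Matrix.smul_apply, Matrix.transpose_apply,
          smul_eq_mul, hw, Sum.elim_inl, neg_neg] at h1
        rw [← Equiv.sum_comp (Equiv.neg n)
          (fun i => -δ₂ * c (-i) * (fromCols (γ₁ • A) (γ₂ • B)) i (Sum.inr k))]
        simp only [Equiv.neg_apply, neg_neg, fromCols_apply_inr, Matrix.smul_apply,
          smul_eq_mul]
        have e3 : ∑ i, -δ₂ * c i * (γ₂ * B (-i) k)
            = γ₁ * ∑ i, c i * (δ₁ * B (-k) i) :=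
          bb_sum_factor _ _ _ (fun i => by
            rw [sB' i k]; linear_combination (-(c i * B (-k) i)) * hCSS)
        rw [e3, h1]
  · simp only [hammingNorm]
    refine Finset.card_nbij'
      (Sum.elim (fun i => Sum.inr (-i)) (fun i => Sum.inl (-i)))
      (Sum.elim (fun i => Sum.inr (-i)) (fun i => Sum.inl (-i))) ?_ ?_ ?_ ?_
    · rintro (a | a) ha <;>
        simpa [hw] using Finset.mem_filter.mp ha |>.2
    · rintro (a | a) ha <;>
        · simp only [Finset.mem_coe, Finset.mem_filter, Finset.mem_univ, true_and] at ha ⊢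
          simp [hw, ha]
    · rintro (a | a) _ <;> simp
    · rintro (a | a) _ <;> simp

end Aux

/-- for a qudit bivariate bicycle code with `γ₁δ₁ + γ₂δ₂ = 0`, if
`ker H_Z ⊄ rowspace H_X` then the set `ker H_X \ rowspace H_Z` is also nonempty and the
two minimum logical weights coincide: `d_X = d_Z`. -/
theorem bb_dX_eq_dZ
    {F : Type*} [Field F] [Fintype F] [DecidableEq F] (ℓ m : ℕ) [NeZero ℓ] [NeZero m]
    (x y A B : Matrix (ZMod ℓ × ZMod m) (ZMod ℓ × ZMod m) F)
    (hx : x = cyclicShift ℓ F ⊗ₖ (1 : Matrix (ZMod m) (ZMod m) F))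
    (hy : y = (1 : Matrix (ZMod ℓ) (ZMod ℓ) F) ⊗ₖ cyclicShift m F)
    (hA : A ∈ Submodule.span F {M : Matrix (ZMod ℓ × ZMod m) (ZMod ℓ × ZMod m) F |
        ∃ a b : ℕ, M = x ^ a * y ^ b})
    (hB : B ∈ Submodule.span F {M : Matrix (ZMod ℓ × ZMod m) (ZMod ℓ × ZMod m) F |
        ∃ a b : ℕ, M = x ^ a * y ^ b})
    (γ₁ γ₂ δ₁ δ₂ : F) (hγ₁ : γ₁ ≠ 0) (hγ₂ : γ₂ ≠ 0) (hδ₁ : δ₁ ≠ 0) (hδ₂ : δ₂ ≠ 0)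
    (hCSS : γ₁ * δ₁ + γ₂ * δ₂ = 0)
    (HX HZ : Matrix (ZMod ℓ × ZMod m) ((ZMod ℓ × ZMod m) ⊕ (ZMod ℓ × ZMod m)) F)
    (hHX : HX = fromCols (γ₁ • A) (γ₂ • B))
    (hHZ : HZ = fromCols (δ₁ • Bᵀ) (δ₂ • Aᵀ))
    (hne : ∃ v : ((ZMod ℓ × ZMod m) ⊕ (ZMod ℓ × ZMod m)) → F,
      HZ.mulVec v = 0 ∧ v ∉ Submodule.span F (Set.range HX)) :
    (∃ v : ((ZMod ℓ × ZMod m) ⊕ (ZMod ℓ × ZMod m)) → F,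
      HX.mulVec v = 0 ∧ v ∉ Submodule.span F (Set.range HZ)) ∧
    sInf {w : ℕ | ∃ v : ((ZMod ℓ × ZMod m) ⊕ (ZMod ℓ × ZMod m)) → F,
        HZ.mulVec v = 0 ∧ v ∉ Submodule.span F (Set.range HX) ∧ hammingNorm v = w} =
    sInf {w : ℕ | ∃ v : ((ZMod ℓ × ZMod m) ⊕ (ZMod ℓ × ZMod m)) → F,
        HX.mulVec v = 0 ∧ v ∉ Submodule.span F (Set.range HZ) ∧ hammingNorm v = w} := by
  have sA := bb_span_symm x y A hx hy hA
  have sB := bb_span_symm x y B hx hy hB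
  have sBT : ∀ i j, Bᵀ (-i) (-j) = Bᵀ j i := fun i j => by
    simp only [Matrix.transpose_apply]; exact sB j i
  have sAT : ∀ i j, Aᵀ (-i) (-j) = Aᵀ j i := fun i j => by
    simp only [Matrix.transpose_apply]; exact sA j i
  have hCSS' : δ₁ * γ₁ + δ₂ * γ₂ = 0 := by linear_combination hCSS
  subst hHX hHZ
  have fwd := fun v hv hvs => bb_key A B sA sB γ₁ γ₂ δ₁ δ₂ hγ₁ hδ₂ hCSS v hv hvs
  have bwd : ∀ v, (fromCols (γ₁ • A) (γ₂ • B)).mulVec v = 0 →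
      v ∉ Submodule.span F (Set.range (fromCols (δ₁ • Bᵀ) (δ₂ • Aᵀ))) →
      ∃ w, (fromCols (δ₁ • Bᵀ) (δ₂ • Aᵀ)).mulVec w = 0 ∧
        w ∉ Submodule.span F (Set.range (fromCols (γ₁ • A) (γ₂ • B))) ∧
        hammingNorm w = hammingNorm v := by
    intro v hv hvs
    have h := bb_key Bᵀ Aᵀ sBT sAT δ₁ δ₂ γ₁ γ₂ hδ₁ hγ₂ hCSS' v
      (by simpa [Matrix.transpose_transpose] using hv)
      (by simpa [Matrix.transpose_transpose] using hvs)
    simpa [Matrix.transpose_transpose] using h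
  obtain ⟨v0, hv0, hv0s⟩ := hne
  constructor
  · obtain ⟨w, h1, h2, _⟩ := fwd v0 hv0 hv0s
    exact ⟨w, h1, h2⟩
  · congr 1
    ext k
    simp only [Set.mem_setOf_eq]
    constructor
    · rintro ⟨v, hv, hvs, rfl⟩
      obtain ⟨w, h1, h2, h3⟩ := fwd v hv hvs
      exact ⟨w, h1, h2, h3⟩
    · rintro ⟨v, hv, hvs, rfl⟩
      obtain ⟨w, h1, h2, h3⟩ := bwd v hv hvs
      exact ⟨w, h1, h2, h3⟩
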